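/- Let G be a graph on n vertices with minimum degree at least 2, no connected component isomorphic to an odd cycle, and constant threshold τ(v) = 2 for all vertices. Then G has a dynamic monopoly of size at most n/2. -/

import Mathlib

open SimpleGraph

/-- One step of the irreversible activation process: every vertex with at least `τ v`
active neighbors becomes active, and active vertices stay active. -/
def activationStep {V : Type*} (G : SimpleGraph V) (τ : V → ℕ) (A : Set V) : Set V :=
  A ∪ {v | τ v ≤ (G.neighborSet v ∩ A).ncard}

/-- `D` is a dynamic monopoly (dynamo) of `(G, τ)`: iterating the activation process
starting from `D` eventually activates all vertices. -/
def IsDynamo {V : Type*} (G : SimpleGraph V) (τ : V → ℕ) (D : Set V) : Prop :=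
  ∃ j : ℕ, (activationStep G τ)^[j] D = Set.univ

/-- `K` is (the vertex set of) a resistant subgraph of `(G, τ)`:
every vertex `v` of `K` satisfies `d_K(v) ≥ d_G(v) − τ(v) + 1` (as integers). -/
def IsResistant {V : Type*} (G : SimpleGraph V) (τ : V → ℕ) (K : Set V) : Prop :=
  K.Nonempty ∧ ∀ v ∈ K, (G.neighborSet v).ncard + 1 ≤ (G.neighborSet v ∩ K).ncard + τ v

/-- The minimum size of a dynamic monopoly of `(G, τ)`. -/
noncomputable def dyn {V : Type*} (G : SimpleGraph V) (τ : V → ℕ) : ℕ :=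
  sInf {k : ℕ | ∃ D : Set V, D.ncard = k ∧ IsDynamo G τ D}

section DynMain
variable {V : Type*} [Fintype V] {G : SimpleGraph V} {d : V}
set_option linter.unusedSectionVars false
set_option linter.deprecated false

lemma step_subset (τ : V → ℕ) (A : Set V) : A ⊆ activationStep G τ A :=
  Set.subset_union_left

lemma step_mono (τ : V → ℕ) {A B : Set V} (h : A ⊆ B) :
    activationStep G τ A ⊆ activationStep G τ B := by
  rintro v (hv | hv)
  · exact Or.inl (h hv)
  · exact Or.inr (le_trans hv (Set.ncard_le_ncard
      (Set.inter_subset_inter_right _ h) (Set.toFinite _)))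

/-- certificate for activation ordering -/
def Cert (G : SimpleGraph V) (τ : V → ℕ) (D : Set V) (L : List V) : Prop :=
  ∀ (i : ℕ) (h : i < L.length),
    τ (L.get ⟨i, h⟩) ≤ (G.neighborSet (L.get ⟨i, h⟩) ∩ (D ∪ {x | x ∈ L.take i})).ncard

lemma cert_iterate (τ : V → ℕ) {D : Set V} {L : List V} (hc : Cert G τ D L) :
    ∀ i : ℕ, D ∪ {x | x ∈ L.take i} ⊆ (activationStep G τ)^[i] D := by
  intro i
  induction i with
  | zero => simp
  | succ i ih =>
      rw [Function.iterate_succ_apply']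
      by_cases hi : i < L.length
      · rw [List.take_succ]
        have hget : L[i]? = some (L.get ⟨i, hi⟩) := by
          rw [List.getElem?_eq_getElem hi]; rfl
        rintro x (hx | hx)
        · exact step_subset τ _ (ih (Or.inl hx))
        · simp only [hget, Set.mem_setOf_eq, List.mem_append, Option.toList_some,
            List.mem_singleton] at hx
          rcases hx with hx | rfl
          · exact step_subset τ _ (ih (Or.inr hx))
          · refine Or.inr ?_
            refine le_trans (hc i hi) (Set.ncard_le_ncard ?_ (Set.toFinite _))
            exact Set.inter_subset_inter_right _ ih
      · rw [List.take_of_length_le (by omega)]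
        rw [List.take_of_length_le (le_of_not_gt hi)] at ih
        exact fun x hx => step_subset τ _ (ih hx)

lemma cert_dynamo (τ : V → ℕ) {D : Set V} {L : List V} (hc : Cert G τ D L)
    (hun : D ∪ {x | x ∈ L} = Set.univ) : ∃ j : ℕ, (activationStep G τ)^[j] D = Set.univ := by
  refine ⟨L.length, Set.eq_univ_of_univ_subset ?_⟩
  have := cert_iterate τ hc L.length
  rwa [List.take_length, hun] at this



lemma two_le_ncard_inter {b x y : V} {A : Set V} (hx : G.Adj b x) (hy : G.Adj b y)
    (hxy : x ≠ y) (hxA : x ∈ A) (hyA : y ∈ A) :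
    2 ≤ (G.neighborSet b ∩ A).ncard := by
  have hsub : ({x, y} : Set V) ⊆ G.neighborSet b ∩ A := by
    rintro z (rfl | rfl)
    · exact ⟨hx, hxA⟩
    · exact ⟨hy, hyA⟩
  calc 2 = ({x, y} : Set V).ncard := (Set.ncard_pair hxy).symm
    _ ≤ _ := Set.ncard_le_ncard hsub (Set.toFinite _)

lemma ncard_listset {l : List V} (h : l.Nodup) : ({x | x ∈ l} : Set V).ncard = l.length := by
  classical
  have : ({x | x ∈ l} : Set V) = ↑l.toFinset := by ext x; simp
  rw [this, Set.ncard_coe_finset, List.toFinset_card_of_nodup h]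

/-- Configuration: seeds D plus an activation ordering L covering S, with |D| ≤ |L|. -/
def Good (G : SimpleGraph V) (S : Set V) : Prop :=
  ∃ (D : Set V) (L : List V), L.Nodup ∧ (∀ x ∈ L, x ∉ D) ∧
    (D ∪ {x | x ∈ L} = S) ∧ D.ncard ≤ L.length ∧ Cert G (fun _ => 2) D L

lemma good_empty : Good G ∅ := by
  refine ⟨∅, [], by simp, by simp, by simp, by simp, ?_⟩
  intro i h; simp at h

lemma Good.extend {S : Set V} (hS : Good G S) (Dadd : Set V) (Ladd : List V)
    (hLnd : Ladd.Nodup) (hLS : ∀ x ∈ Ladd, x ∉ S) (hDS : ∀ x ∈ Dadd, x ∉ S)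
    (hLD : ∀ x ∈ Ladd, x ∉ Dadd)
    (hcard : Dadd.ncard ≤ Ladd.length)
    (hcert : ∀ (i : ℕ) (h : i < Ladd.length),
      2 ≤ (G.neighborSet (Ladd.get ⟨i, h⟩) ∩ (S ∪ Dadd ∪ {x | x ∈ Ladd.take i})).ncard) :
    Good G (S ∪ Dadd ∪ {x | x ∈ Ladd}) := by
  obtain ⟨D, L, hnd, hld, huni, hcd, hct⟩ := hS
  have hDsub : D ⊆ S := huni ▸ Set.subset_union_left
  have hLsub : ∀ x ∈ L, x ∈ S := fun x hx => huni ▸ Or.inr hx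
  refine ⟨D ∪ Dadd, L ++ Ladd, ?_, ?_, ?_, ?_, ?_⟩
  · rw [List.nodup_append']
    exact ⟨hnd, hLnd, fun x hx hx2 => hLS x hx2 (hLsub x hx)⟩
  · intro x hx
    rcases List.mem_append.1 hx with h | h
    · rintro (h1 | h1)
      · exact hld x h h1
      · exact hDS x h1 (hLsub x h)
    · rintro (h1 | h1)
      · exact hLS x h (hDsub h1)
      · exact hLD x h h1
  · rw [← huni]; ext x
    simp only [Set.mem_union, Set.mem_setOf_eq, List.mem_append]
    tauto
  · have hdisj : Disjoint D Dadd := by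
      rw [Set.disjoint_left]; exact fun x hx hx2 => hDS x hx2 (hDsub hx)
    rw [Set.ncard_union_eq hdisj (Set.toFinite _) (Set.toFinite _), List.length_append]
    omega
  · intro i h
    rw [List.length_append] at h
    by_cases hi : i < L.length
    · have hget : (L ++ Ladd).get ⟨i, by rw [List.length_append]; omega⟩ = L.get ⟨i, hi⟩ :=
        List.getElem_append_left hi
      rw [hget]
      refine le_trans (hct i hi) (Set.ncard_le_ncard ?_ (Set.toFinite _))
      refine Set.inter_subset_inter_right _ ?_
      rintro x (hx | hx)
      · exact Or.inl (Or.inl hx)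
      · refine Or.inr ?_
        simp only [Set.mem_setOf_eq] at hx ⊢
        rw [List.take_append_of_le_length (le_of_lt hi)]
        exact hx
    · obtain ⟨j, rfl⟩ : ∃ j, i = L.length + j := ⟨i - L.length, by omega⟩
      have hj : j < Ladd.length := by omega
      have hget : (L ++ Ladd).get ⟨L.length + j, by rw [List.length_append]; omega⟩ =
          Ladd.get ⟨j, hj⟩ := by
        simp only [List.get_eq_getElem]
        rw [List.getElem_append_right (by omega)]
        congr 1
        omega
      rw [hget]
      refine le_trans (hcert j hj) (Set.ncard_le_ncard ?_ (Set.toFinite _))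
      refine Set.inter_subset_inter_right _ ?_
      have htk : (L ++ Ladd).take (L.length + j) = L ++ Ladd.take j := List.take_length_add_append j
      rintro x ((hx | hx) | hx)
      · rcases huni ▸ hx with hx2
        rcases hx2 with hx2 | hx2
        · exact Or.inl (Or.inl hx2)
        · exact Or.inr (htk ▸ List.mem_append.2 (Or.inl hx2))
      · exact Or.inl (Or.inr hx)
      · exact Or.inr (htk ▸ List.mem_append.2 (Or.inr hx))

/-- an index-based cycle inside `R` -/
def IsCyc (G : SimpleGraph V) (d : V) (R : Set V) (zs : List V) : Prop :=
  3 ≤ zs.length ∧ zs.Nodup ∧ (∀ x ∈ zs, x ∈ R) ∧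
  (∀ i, i + 1 < zs.length → G.Adj (zs.getD i d) (zs.getD (i+1) d)) ∧
  G.Adj (zs.getD (zs.length - 1) d) (zs.getD 0 d)

lemma getD_eq_get' {l : List V} {i : ℕ} (h : i < l.length) : l.getD i d = l.get ⟨i, h⟩ :=
  List.getD_eq_get l d ⟨i, h⟩

lemma getD_mem {l : List V} {i : ℕ} (h : i < l.length) : l.getD i d ∈ l := by
  rw [getD_eq_get' h]; exact List.get_mem l ⟨i, h⟩

lemma getD_inj {l : List V} (hnd : l.Nodup) {i j : ℕ} (hi : i < l.length) (hj : j < l.length)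
    (hij : l.getD i d = l.getD j d) : i = j := by
  rw [getD_eq_get' hi, getD_eq_get' hj] at hij
  simpa using (hnd.get_inj_iff.1 hij)

lemma getD_take' {l : List V} {m i : ℕ} (h : i < m) (h2 : i < l.length) :
    (l.take m).getD i d = l.getD i d := by
  rw [getD_eq_get' (by simp; omega), getD_eq_get' h2]
  simp [List.get_eq_getElem, List.getElem_take]

lemma getD_drop' {l : List V} {m i : ℕ} (h : m + i < l.length) :
    (l.drop m).getD i d = l.getD (m + i) d := by
  rw [getD_eq_get' (by rw [List.length_drop]; omega), getD_eq_get' h]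
  simp [List.get_eq_getElem, List.getElem_drop]

lemma chain'_getD {l : List V} (hc : l.Chain' G.Adj) {i : ℕ} (h : i + 1 < l.length) :
    G.Adj (l.getD i d) (l.getD (i+1) d) := by
  rw [getD_eq_get' (by omega), getD_eq_get' h]
  exact List.isChain_iff_getElem.1 hc i (by omega)

/-- paths with min degree 2 inside a closed set yield a cycle -/
lemma exists_cyc (d : V) {R : Set V}
    (hdeg : ∀ v ∈ R, 2 ≤ (G.neighborSet v).ncard)
    (hcl : ∀ v ∈ R, ∀ w, G.Adj v w → w ∈ R) (hne : R.Nonempty) :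
    ∃ zs, IsCyc G d R zs := by
  obtain ⟨v0, hv0⟩ := hne
  suffices h : ∀ b (p : List V) (hp : p ≠ []), p.Nodup → (∀ x ∈ p, x ∈ R) →
      p.Chain' G.Adj → Fintype.card V ≤ b + p.length → ∃ zs, IsCyc G d R zs by
    exact h (Fintype.card V) [v0] (by simp) (by simp) (by simpa) (List.isChain_singleton _) (by simp)
  intro b
  induction b with
  | zero =>
      intro p hp hnd hmem hch hcard
      -- p already has max length; head cannot be extended
      by_cases hext : ∃ w, G.Adj (p.head hp) w ∧ w ∉ p
      · obtain ⟨w, hw, hwp⟩ := hext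
        have : (w :: p).Nodup := List.nodup_cons.2 ⟨hwp, hnd⟩
        have := this.length_le_card
        simp at this
        omega
      · -- construct cycle
        push_neg at hext
        obtain ⟨v, t, rfl⟩ : ∃ v t, p = v :: t :=
          ⟨p.head hp, p.tail, (List.cons_head_tail hp).symm⟩
        simp only [List.head_cons] at hext
        have hvR : v ∈ R := hmem v (by simp)
        have h2 : 2 ≤ (G.neighborSet v).ncard := hdeg v hvR
        have hnbr : ∀ x, x ∈ G.neighborSet v → x ∈ t := by
          intro x hx
          rcases List.mem_cons.1 (hext x hx) with rfl | h
          · exact absurd hx (G.irrefl)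
          · exact h
        obtain ⟨x, hx, y, hy, hxy⟩ :=
          (Set.one_lt_ncard (s := G.neighborSet v) (Set.toFinite _)).1 (by omega)
        obtain ⟨⟨ix, hix⟩, hxeq⟩ := List.mem_iff_get.1 (hnbr x hx)
        obtain ⟨⟨iy, hiy⟩, hyeq⟩ := List.mem_iff_get.1 (hnbr y hy)
        have hkey : ∃ j, ∃ hj : j < t.length, 1 ≤ j ∧ G.Adj v (t.get ⟨j, hj⟩) := by
          rcases le_or_gt ix iy with hle | hlt
          · have : ix ≠ iy := fun h => hxy (by rw [← hxeq, ← hyeq]; exact congrArg _ (Fin.mk_eq_mk.2 h))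
            exact ⟨iy, hiy, by omega, by rw [hyeq]; exact hy⟩
          · exact ⟨ix, hix, by omega, by rw [hxeq]; exact hx⟩
        obtain ⟨j, hj, hj1, hadj⟩ := hkey
        refine ⟨v :: t.take (j+1), ?_, ?_, ?_, ?_, ?_⟩
        · simp only [List.length_cons, List.length_take]
          omega
        · exact ((t.take_sublist (j+1)).cons₂ v).nodup hnd
        · intro z hz
          exact hmem z (((t.take_sublist (j+1)).cons₂ v).mem hz)
        · have hlen : (v :: t.take (j+1)).length = j + 2 := by
            simp only [List.length_cons, List.length_take]; omega
          have hysget : ∀ i ≤ j + 1, (v :: t.take (j+1)).getD i d = (v :: t).getD i d := by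
            intro i hi
            cases i with
            | zero => simp
            | succ i =>
                rw [List.getD_cons_succ, List.getD_cons_succ]
                exact getD_take' (by omega) (by omega)
          intro i hi
          rw [hlen] at hi
          rw [hysget i (by omega), hysget (i+1) (by omega)]
          exact chain'_getD hch (by simp; omega)
        · have hlen : (v :: t.take (j+1)).length = j + 2 := by
            simp only [List.length_cons, List.length_take]; omega
          have hysget : ∀ i ≤ j + 1, (v :: t.take (j+1)).getD i d = (v :: t).getD i d := by
            intro i hi
            cases i with
            | zero => simp
            | succ i =>
                rw [List.getD_cons_succ, List.getD_cons_succ]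
                exact getD_take' (by omega) (by omega)
          rw [hlen]
          have h1 : j + 2 - 1 = j + 1 := by omega
          rw [h1, hysget (j+1) (by omega), hysget 0 (by omega)]
          rw [List.getD_cons_succ, List.getD_cons_zero, getD_eq_get' hj]
          exact hadj.symm
  | succ b ih =>
      intro p hp hnd hmem hch hcard
      by_cases hext : ∃ w, G.Adj (p.head hp) w ∧ w ∉ p
      · obtain ⟨w, hw, hwp⟩ := hext
        refine ih (w :: p) (by simp) (List.nodup_cons.2 ⟨hwp, hnd⟩) ?_ ?_ (by simp; omega)
        · intro x hx
          rcases List.mem_cons.1 hx with rfl | hx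
          · exact hcl _ (hmem _ (List.head_mem hp)) _ hw
          · exact hmem x hx
        · rw [List.Chain', List.isChain_cons]
          refine ⟨?_, hch⟩
          intro y hy
          obtain ⟨v, t, rfl⟩ : ∃ v t, p = v :: t := ⟨p.head hp, p.tail, (List.cons_head_tail hp).symm⟩
          simp at hy
          subst hy
          simpa using hw.symm
      · -- same construction as in the zero case: abstract it is harder, just redo
        push_neg at hext
        obtain ⟨v, t, rfl⟩ : ∃ v t, p = v :: t :=
          ⟨p.head hp, p.tail, (List.cons_head_tail hp).symm⟩
        simp only [List.head_cons] at hext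
        have hvR : v ∈ R := hmem v (by simp)
        have h2 : 2 ≤ (G.neighborSet v).ncard := hdeg v hvR
        have hnbr : ∀ x, x ∈ G.neighborSet v → x ∈ t := by
          intro x hx
          rcases List.mem_cons.1 (hext x hx) with rfl | h
          · exact absurd hx (G.irrefl)
          · exact h
        obtain ⟨x, hx, y, hy, hxy⟩ :=
          (Set.one_lt_ncard (s := G.neighborSet v) (Set.toFinite _)).1 (by omega)
        obtain ⟨⟨ix, hix⟩, hxeq⟩ := List.mem_iff_get.1 (hnbr x hx)
        obtain ⟨⟨iy, hiy⟩, hyeq⟩ := List.mem_iff_get.1 (hnbr y hy)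
        have hkey : ∃ j, ∃ hj : j < t.length, 1 ≤ j ∧ G.Adj v (t.get ⟨j, hj⟩) := by
          rcases le_or_gt ix iy with hle | hlt
          · have : ix ≠ iy := fun h => hxy (by rw [← hxeq, ← hyeq]; exact congrArg _ (Fin.mk_eq_mk.2 h))
            exact ⟨iy, hiy, by omega, by rw [hyeq]; exact hy⟩
          · exact ⟨ix, hix, by omega, by rw [hxeq]; exact hx⟩
        obtain ⟨j, hj, hj1, hadj⟩ := hkey
        refine ⟨v :: t.take (j+1), ?_, ?_, ?_, ?_, ?_⟩
        · simp only [List.length_cons, List.length_take]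
          omega
        · exact ((t.take_sublist (j+1)).cons₂ v).nodup hnd
        · intro z hz
          exact hmem z (((t.take_sublist (j+1)).cons₂ v).mem hz)
        · have hlen : (v :: t.take (j+1)).length = j + 2 := by
            simp only [List.length_cons, List.length_take]; omega
          have hysget : ∀ i ≤ j + 1, (v :: t.take (j+1)).getD i d = (v :: t).getD i d := by
            intro i hi
            cases i with
            | zero => simp
            | succ i =>
                rw [List.getD_cons_succ, List.getD_cons_succ]
                exact getD_take' (by omega) (by omega)
          intro i hi
          rw [hlen] at hi
          rw [hysget i (by omega), hysget (i+1) (by omega)]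
          exact chain'_getD hch (by simp; omega)
        · have hlen : (v :: t.take (j+1)).length = j + 2 := by
            simp only [List.length_cons, List.length_take]; omega
          have hysget : ∀ i ≤ j + 1, (v :: t.take (j+1)).getD i d = (v :: t).getD i d := by
            intro i hi
            cases i with
            | zero => simp
            | succ i =>
                rw [List.getD_cons_succ, List.getD_cons_succ]
                exact getD_take' (by omega) (by omega)
          rw [hlen]
          have h1 : j + 2 - 1 = j + 1 := by omega
          rw [h1, hysget (j+1) (by omega), hysget 0 (by omega)]
          rw [List.getD_cons_succ, List.getD_cons_zero, getD_eq_get' hj]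
          exact hadj.symm

lemma IsCyc.rot1 {R : Set V} {a : V} {t : List V} (h : IsCyc G d R (a :: t)) :
    IsCyc G d R (t ++ [a]) := by
  obtain ⟨hlen, hnd, hmem, hadj, hcl⟩ := h
  have hn : 1 ≤ t.length := by simp at hlen; omega
  have hperm := List.perm_append_singleton a t
  have hget1 : ∀ i < t.length, (t ++ [a]).getD i d = t.getD i d :=
    fun i hi => List.getD_append t [a] d i hi
  have hget2 : (t ++ [a]).getD t.length d = a := by
    rw [getD_eq_get' (by simp)]
    simp [List.get_eq_getElem, List.getElem_append_right (le_refl t.length)]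
  have hlen' : (t ++ [a]).length = t.length + 1 := by simp
  refine ⟨by simp at hlen ⊢; omega, hperm.nodup_iff.2 hnd, ?_, ?_, ?_⟩
  · exact fun x hx => hmem x (hperm.mem_iff.1 hx)
  · intro i hi
    rw [hlen'] at hi
    rcases lt_or_eq_of_le (show i + 1 ≤ t.length by omega) with h1 | h1
    · rw [hget1 i (by omega), hget1 (i+1) h1]
      have := hadj (i+1) (by simp; omega)
      rwa [List.getD_cons_succ, List.getD_cons_succ] at this
    · rw [hget1 i (by omega), h1, hget2]
      have := hcl
      simp only [List.length_cons] at this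
      rw [show t.length + 1 - 1 = (t.length - 1) + 1 by omega, List.getD_cons_succ,
        List.getD_cons_zero] at this
      rwa [show i = t.length - 1 by omega]
  · rw [hlen', show t.length + 1 - 1 = t.length by omega, hget2, hget1 0 (by omega)]
    have := hadj 0 (by simp; omega)
    rwa [List.getD_cons_zero, List.getD_cons_succ] at this

lemma IsCyc.rotate {R : Set V} : ∀ (i : ℕ) (zs : List V), IsCyc G d R zs → ∀ _ : i < zs.length,
    ∃ ys, IsCyc G d R ys ∧ (∀ x, x ∈ ys ↔ x ∈ zs) ∧ ys.length = zs.length ∧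
      ys.getD 0 d = zs.getD i d := by
  intro i
  induction i with
  | zero => exact fun zs h _ => ⟨zs, h, fun x => Iff.rfl, rfl, rfl⟩
  | succ i ih =>
      intro zs hz hi
      obtain ⟨a, t, rfl⟩ : ∃ a t, zs = a :: t :=
        ⟨zs.head (by have := hz.1; intro h; simp [h] at this), zs.tail,
          (List.cons_head_tail _).symm⟩
      have hz' := hz.rot1
      have hlen : (t ++ [a]).length = (a :: t).length := by simp
      obtain ⟨ys, h1, h2, h3, h4⟩ := ih (t ++ [a]) hz' (by simp at hi ⊢; omega)
      refine ⟨ys, h1, ?_, by omega, ?_⟩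
      · intro x
        rw [h2 x, (List.perm_append_singleton a t).mem_iff]
      · rw [h4, List.getD_cons_succ, List.getD_append t [a] d i (by simp at hi; omega)]

lemma chord_short {R : Set V} {zs : List V} (hz : IsCyc G d R zs) {a b : ℕ}
    (hb : b < zs.length) (hab : a < b) (h2 : 2 ≤ b - a)
    (hne : ¬(a = 0 ∧ b = zs.length - 1))
    (hadj : G.Adj (zs.getD a d) (zs.getD b d)) :
    ∃ ys, IsCyc G d R ys ∧ ys.length < zs.length := by
  obtain ⟨hlen, hnd, hmem, hadjz, hcl⟩ := hz
  set k := zs.length with hk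
  refine ⟨(zs.drop a).take (b - a + 1), ⟨?_, ?_, ?_, ?_, ?_⟩, ?_⟩
  all_goals
    have hlent : ((zs.drop a).take (b - a + 1)).length = b - a + 1 := by
      rw [List.length_take, List.length_drop]; omega
  · omega
  · exact (((zs.drop a).take_sublist _).trans (zs.drop_sublist a)).nodup hnd
  · exact fun x hx => hmem x ((((zs.drop a).take_sublist _).trans (zs.drop_sublist a)).mem hx)
  all_goals
    have hgets : ∀ i ≤ b - a, ((zs.drop a).take (b - a + 1)).getD i d = zs.getD (a + i) d := by
      intro i hi
      rw [getD_take' (by omega) (by rw [List.length_drop]; omega), getD_drop' (by omega)]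
  · intro i hi
    rw [hlent] at hi
    rw [hgets i (by omega), hgets (i+1) (by omega), show a + (i+1) = (a+i) + 1 by omega]
    exact hadjz (a+i) (by omega)
  · rw [hlent, show b - a + 1 - 1 = b - a by omega, hgets (b-a) (le_refl _),
      hgets 0 (by omega), show a + (b - a) = b by omega, show a + 0 = a by omega]
    exact hadj.symm
  · omega

lemma min_cyc_chordless {R : Set V} {zs : List V} (hz : IsCyc G d R zs)
    (hmin : ∀ ys, IsCyc G d R ys → zs.length ≤ ys.length) {a b : ℕ}
    (ha : a < zs.length) (hb : b < zs.length)
    (hadj : G.Adj (zs.getD a d) (zs.getD b d)) :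
    b = a + 1 ∨ a = b + 1 ∨ (a = 0 ∧ b = zs.length - 1) ∨ (b = 0 ∧ a = zs.length - 1) := by
  have hk3 := hz.1
  have key : ∀ a b : ℕ, a < b → b < zs.length → G.Adj (zs.getD a d) (zs.getD b d) →
      b = a + 1 ∨ (a = 0 ∧ b = zs.length - 1) := by
    intro a b hab hb hadj
    by_contra hcon
    push_neg at hcon
    obtain ⟨h1, h2⟩ := hcon
    have h3 : 2 ≤ b - a := by omega
    have hne : ¬(a = 0 ∧ b = zs.length - 1) := fun ⟨x, y⟩ => h2 x y
    obtain ⟨ys, hys, hlt⟩ := chord_short hz hb hab h3 hne hadj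
    exact absurd (hmin ys hys) (by omega)
  rcases lt_trichotomy a b with h | h | h
  · rcases key a b h hb hadj with h1 | h1
    · exact Or.inl h1
    · exact Or.inr (Or.inr (Or.inl h1))
  · subst h
    exact absurd hadj (G.irrefl)
  · rcases key b a h ha hadj.symm with h1 | h1
    · exact Or.inr (Or.inl h1)
    · exact Or.inr (Or.inr (Or.inr h1))

lemma mem_range_map {n : ℕ} {f : ℕ → V} {x : V} :
    x ∈ (List.range n).map f ↔ ∃ j < n, f j = x := by
  simp [List.mem_map]

lemma get_range_map {n : ℕ} {f : ℕ → V} {i : ℕ} (h : i < ((List.range n).map f).length) :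
    ((List.range n).map f).get ⟨i, h⟩ = f i := by
  simp only [List.get_eq_getElem, List.getElem_map]
  congr 1
  exact List.getElem_range _

lemma seed_even {S : Set V} (hS : Good G S) {zs : List V}
    (hz : IsCyc G d {x | x ∉ S} zs) (hk : Even zs.length) :
    ∃ S', S ⊆ S' ∧ S ≠ S' ∧ Good G S' := by
  obtain ⟨hlen, hnd, hmem, hadj, hcl⟩ := hz
  set k := zs.length with hkdef
  obtain ⟨m, hm⟩ : ∃ m, k = 2 * m := by
    obtain ⟨m, hm⟩ := hk; exact ⟨m, by omega⟩
  have hm2 : 2 ≤ m := by omega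
  set Dl : List V := (List.range m).map (fun j => zs.getD (2*j) d) with hDl
  set Ll : List V := (List.range m).map (fun j => zs.getD (2*j+1) d) with hLl
  have hinj : ∀ {i j : ℕ}, i < k → j < k → zs.getD i d = zs.getD j d → i = j :=
    fun hi hj h => getD_inj hnd hi hj h
  have hDlnd : Dl.Nodup := by
    refine List.Nodup.map_on ?_ (List.nodup_range)
    intro i hi j hj h
    have := hinj (by simp at hi; omega) (by simp at hj; omega) h
    omega
  have hLlnd : Ll.Nodup := by
    refine List.Nodup.map_on ?_ (List.nodup_range)
    intro i hi j hj h
    have := hinj (by simp at hi; omega) (by simp at hj; omega) h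
    omega
  have hDmem : ∀ x ∈ Dl, x ∈ zs := by
    intro x hx; obtain ⟨j, hj, rfl⟩ := mem_range_map.1 hx
    exact getD_mem (by omega)
  have hLmem : ∀ x ∈ Ll, x ∈ zs := by
    intro x hx; obtain ⟨j, hj, rfl⟩ := mem_range_map.1 hx
    exact getD_mem (by omega)
  refine ⟨S ∪ {x | x ∈ Dl} ∪ {x | x ∈ Ll}, ?_, ?_, ?_⟩
  · intro x hx; exact Or.inl (Or.inl hx)
  · intro h
    have h0 : zs.getD 0 d ∈ S := by
      rw [h]
      refine Or.inl (Or.inr ?_)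
      exact mem_range_map.2 ⟨0, by omega, by norm_num⟩
    exact (hmem _ (getD_mem (by omega))) h0
  refine hS.extend {x | x ∈ Dl} Ll hLlnd ?_ ?_ ?_ ?_ ?_
  · exact fun x hx => hmem x (hLmem x hx)
  · exact fun x hx => hmem x (hDmem x hx)
  · intro x hx hx2
    obtain ⟨j, hj, rfl⟩ := mem_range_map.1 hx
    obtain ⟨i, hi, heq⟩ := mem_range_map.1 hx2
    have := hinj (by omega) (by omega) heq
    omega
  · rw [ncard_listset hDlnd]
    simp [hDl, hLl]
  · intro i hi
    simp only [hLl, List.length_map, List.length_range] at hi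
    have hget : Ll.get ⟨i, by simpa [hLl] using hi⟩ = zs.getD (2*i+1) d := get_range_map _
    rw [hget]
    have hx : zs.getD (2*i) d ∈ {x | x ∈ Dl} :=
      mem_range_map.2 ⟨i, hi, rfl⟩
    have hadj1 : G.Adj (zs.getD (2*i+1) d) (zs.getD (2*i) d) := (hadj (2*i) (by omega)).symm
    rcases lt_or_eq_of_le (show 2*i+2 ≤ k by omega) with h2 | h2
    · -- successor inside
      have hy : zs.getD (2*i+2) d ∈ {x | x ∈ Dl} :=
        mem_range_map.2 ⟨i+1, by omega, by simp only [show 2*(i+1) = 2*i+2 from by omega]⟩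
      have hadj2 : G.Adj (zs.getD (2*i+1) d) (zs.getD (2*i+2) d) := by
        have := hadj (2*i+1) (by omega)
        rwa [show 2*i+1+1 = 2*i+2 by omega] at this
      refine two_le_ncard_inter hadj1 hadj2 ?_ (Or.inl (Or.inr hx)) (Or.inl (Or.inr hy))
      intro h
      have := hinj (by omega) (by omega) h
      omega
    · -- wrap around
      have hy : zs.getD 0 d ∈ {x | x ∈ Dl} :=
        mem_range_map.2 ⟨0, by omega, by norm_num⟩
      have hadj2 : G.Adj (zs.getD (2*i+1) d) (zs.getD 0 d) := by
        have := hcl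
        rwa [show k - 1 = 2*i+1 by omega] at this
      refine two_le_ncard_inter hadj1 hadj2 ?_ (Or.inl (Or.inr hx)) (Or.inl (Or.inr hy))
      intro h
      have := hinj (by omega) (by omega) h
      omega

lemma seed_odd {S : Set V} (hS : Good G S) {zs : List V}
    (hz : IsCyc G d {x | x ∉ S} zs) (hk : Odd zs.length) {w : V}
    (hw : G.Adj (zs.getD 0 d) w) (hwz : w ∉ zs) (hwS : w ∉ S) :
    ∃ S', S ⊆ S' ∧ S ≠ S' ∧ Good G S' := by
  obtain ⟨hlen, hnd, hmem, hadj, hcl⟩ := hz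
  set k := zs.length with hkdef
  obtain ⟨m, hm⟩ : ∃ m, k = 2 * m + 1 := by
    obtain ⟨m, hm⟩ := hk; exact ⟨m, by omega⟩
  have hm1 : 1 ≤ m := by omega
  set Dl : List V := w :: (List.range m).map (fun j => zs.getD (2*j+2) d) with hDl
  set Ll : List V := zs.getD 0 d :: zs.getD 1 d ::
    (List.range (m-1)).map (fun j => zs.getD (2*j+3) d) with hLl
  have hinj : ∀ {i j : ℕ}, i < k → j < k → zs.getD i d = zs.getD j d → i = j :=
    fun hi hj h => getD_inj hnd hi hj h
  have hDlnd : Dl.Nodup := by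
    refine List.nodup_cons.2 ⟨?_, ?_⟩
    · intro hwm
      obtain ⟨j, hj, heq⟩ := mem_range_map.1 hwm
      exact hwz (heq ▸ getD_mem (by omega))
    · refine List.Nodup.map_on ?_ (List.nodup_range)
      intro i hi j hj h
      have := hinj (by simp at hi; omega) (by simp at hj; omega) h
      omega
  have hLlnd : Ll.Nodup := by
    refine List.nodup_cons.2 ⟨?_, List.nodup_cons.2 ⟨?_, ?_⟩⟩
    · intro hmem0
      rcases List.mem_cons.1 hmem0 with h | h
      · have := hinj (by omega) (by omega) h; omega
      · obtain ⟨j, hj, heq⟩ := mem_range_map.1 h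
        have := hinj (by omega) (by omega) heq.symm; omega
    · intro h
      obtain ⟨j, hj, heq⟩ := mem_range_map.1 h
      have := hinj (by omega) (by omega) heq.symm; omega
    · refine List.Nodup.map_on ?_ (List.nodup_range)
      intro i hi j hj h
      have := hinj (by simp at hi; omega) (by simp at hj; omega) h
      omega
  have hDmem : ∀ x ∈ Dl, x = w ∨ x ∈ zs := by
    intro x hx
    rcases List.mem_cons.1 hx with rfl | h
    · exact Or.inl rfl
    · obtain ⟨j, hj, rfl⟩ := mem_range_map.1 h
      exact Or.inr (getD_mem (by omega))
  have hLmem : ∀ x ∈ Ll, x ∈ zs := by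
    intro x hx
    rcases List.mem_cons.1 hx with rfl | hx
    · exact getD_mem (by omega)
    rcases List.mem_cons.1 hx with rfl | hx
    · exact getD_mem (by omega)
    · obtain ⟨j, hj, rfl⟩ := mem_range_map.1 hx
      exact getD_mem (by omega)
  refine ⟨S ∪ {x | x ∈ Dl} ∪ {x | x ∈ Ll}, ?_, ?_, ?_⟩
  · intro x hx; exact Or.inl (Or.inl hx)
  · intro h
    have h0 : zs.getD 0 d ∈ S := by
      rw [h]
      exact Or.inr (List.mem_cons_self)
    exact (hmem _ (getD_mem (by omega))) h0
  refine hS.extend {x | x ∈ Dl} Ll hLlnd ?_ ?_ ?_ ?_ ?_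
  · exact fun x hx => hmem x (hLmem x hx)
  · intro x hx
    rcases hDmem x hx with rfl | h
    · exact hwS
    · exact hmem x h
  · intro x hx hx2
    rcases hDmem x hx2 with rfl | h
    · exact hwz (hLmem x hx)
    · rcases List.mem_cons.1 hx with rfl | hx
      · rcases List.mem_cons.1 hx2 with h2 | h2
        · exact hwz (h2 ▸ hLmem _ hx)
        · obtain ⟨j, hj, heq⟩ := mem_range_map.1 h2
          have := hinj (by omega) (by omega) heq; omega
      rcases List.mem_cons.1 hx with rfl | hx
      · rcases List.mem_cons.1 hx2 with h2 | h2
        · exact hwz (h2 ▸ hLmem _ (by simp [hLl]))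
        · obtain ⟨j, hj, heq⟩ := mem_range_map.1 h2
          have := hinj (by omega) (by omega) heq; omega
      · obtain ⟨j, hj, rfl⟩ := mem_range_map.1 hx
        rcases List.mem_cons.1 hx2 with h2 | h2
        · exact hwz (h2 ▸ getD_mem (by omega))
        · obtain ⟨i, hi, heq⟩ := mem_range_map.1 h2
          have := hinj (by omega) (by omega) heq; omega
  · rw [ncard_listset hDlnd]
    simp only [hDl, hLl, List.length_cons, List.length_map, List.length_range]
    omega
  · intro i hi
    simp only [hLl, List.length_cons, List.length_map, List.length_range] at hi
    match i with
    | 0 =>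
        have hget : Ll.get ⟨0, by simp [hLl]⟩ = zs.getD 0 d := rfl
        rw [hget]
        have hx : w ∈ {x | x ∈ Dl} := List.mem_cons_self
        have hy : zs.getD (k-1) d ∈ {x | x ∈ Dl} := by
          refine List.mem_cons.2 (Or.inr (mem_range_map.2 ⟨m-1, by omega, ?_⟩))
          simp only [show 2*(m-1)+2 = k-1 from by omega]
        refine two_le_ncard_inter hcl.symm hw ?_ (Or.inl (Or.inr hy)) (Or.inl (Or.inr hx))
        intro h
        exact hwz (h ▸ getD_mem (show k-1 < k by omega))
    | 1 =>
        have hget : Ll.get ⟨1, by simp [hLl]⟩ = zs.getD 1 d := rfl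
        rw [hget]
        have hx : zs.getD 0 d ∈ {x | x ∈ Ll.take 1} := by
          simp [hLl]
        have hy : zs.getD 2 d ∈ {x | x ∈ Dl} := by
          refine List.mem_cons.2 (Or.inr (mem_range_map.2 ⟨0, by omega, by norm_num⟩))
        have ha1 : G.Adj (zs.getD 1 d) (zs.getD 0 d) := (hadj 0 (by omega)).symm
        have ha2 : G.Adj (zs.getD 1 d) (zs.getD 2 d) := by
          have := hadj 1 (by omega); rwa [show (1:ℕ)+1 = 2 by norm_num] at this
        refine two_le_ncard_inter ha1 ha2 ?_ (Or.inr hx) (Or.inl (Or.inr hy))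
        intro h
        have := hinj (by omega) (by omega) h; omega
    | (j+2) =>
        have hj : j < m - 1 := by omega
        have hget : Ll.get ⟨j+2, by simp [hLl]; omega⟩ = zs.getD (2*j+3) d := by
          simp only [hLl, List.get_eq_getElem, List.getElem_cons_succ, List.getElem_map]
          rw [List.getElem_range]
        rw [hget]
        have hx : zs.getD (2*j+2) d ∈ {x | x ∈ Dl} :=
          List.mem_cons.2 (Or.inr (mem_range_map.2 ⟨j, by omega, rfl⟩))
        have hy : zs.getD (2*j+4) d ∈ {x | x ∈ Dl} := by
          refine List.mem_cons.2 (Or.inr (mem_range_map.2 ⟨j+1, by omega, ?_⟩))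
          simp only [show 2*(j+1)+2 = 2*j+4 from by omega]
        have ha1 : G.Adj (zs.getD (2*j+3) d) (zs.getD (2*j+2) d) :=
          (hadj (2*j+2) (by omega)).symm
        have ha2 : G.Adj (zs.getD (2*j+3) d) (zs.getD (2*j+4) d) := by
          have := hadj (2*j+3) (by omega)
          rwa [show 2*j+3+1 = 2*j+4 by omega] at this
        refine two_le_ncard_inter ha1 ha2 ?_ (Or.inl (Or.inr hx)) (Or.inl (Or.inr hy))
        intro h
        have := hinj (by omega) (by omega) h; omega


lemma walk_closed {A : Set V} (hA : ∀ x ∈ A, ∀ y, G.Adj x y → y ∈ A) :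
    ∀ {u v : V} (_ : G.Walk u v), u ∈ A → v ∈ A := by
  intro u v p
  induction p with
  | nil => exact id
  | cons h _ ih => exact fun hu => ih (hA _ hu _ h)

lemma no_trapped_odd (hmin : ∀ v : V, 2 ≤ (G.neighborSet v).ncard)
    (hodd : ∀ C : G.ConnectedComponent,
      ¬ (Odd C.supp.ncard ∧ ∀ v ∈ C.supp, (G.neighborSet v).ncard = 2))
    {R : Set V} {zs : List V} (hz : IsCyc G d R zs)
    (hminlen : ∀ ys, IsCyc G d R ys → zs.length ≤ ys.length)
    (hall : ∀ x ∈ zs, ∀ u, G.Adj x u → u ∈ zs)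
    (hk : Odd zs.length) : False := by
  obtain ⟨hlen, hnd, hmem, hadj, hcl⟩ := hz
  set k := zs.length with hkdef
  have hz' : IsCyc G d R zs := ⟨hlen, hnd, hmem, hadj, hcl⟩
  have hinj : ∀ {i j : ℕ}, i < k → j < k → zs.getD i d = zs.getD j d → i = j :=
    fun hi hj h => getD_inj hnd hi hj h
  -- step 1: each vertex on the cycle has neighborhood exactly the two cyclic neighbors
  have hnbhd : ∀ i, i < k → (G.neighborSet (zs.getD i d)).ncard = 2 := by
    intro i hi
    set ip := if i = 0 then k - 1 else i - 1 with hip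
    set inx := if i = k - 1 then 0 else i + 1 with hinx
    have hipk : ip < k := by rw [hip]; split_ifs <;> omega
    have hinxk : inx < k := by rw [hinx]; split_ifs <;> omega
    have hprev : G.Adj (zs.getD i d) (zs.getD ip d) := by
      rw [hip]
      split_ifs with h0
      · subst h0; exact hcl.symm
      · have := hadj (i-1) (by omega)
        rw [show i - 1 + 1 = i by omega] at this
        exact this.symm
    have hnext : G.Adj (zs.getD i d) (zs.getD inx d) := by
      rw [hinx]
      split_ifs with h0
      · subst h0; exact hcl
      · exact hadj i (by omega)
    have hsub : G.neighborSet (zs.getD i d) ⊆ {zs.getD ip d, zs.getD inx d} := by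
      intro u hu
      have hu2 : u ∈ zs := hall _ (getD_mem hi) u hu
      obtain ⟨⟨b, hb⟩, heq⟩ := List.mem_iff_get.1 hu2
      rw [← getD_eq_get' hb] at heq
      have hadjib : G.Adj (zs.getD i d) (zs.getD b d) := heq ▸ hu
      have hcases : ip = b ∨ inx = b := by
        rcases min_cyc_chordless hz' hminlen hi hb hadjib with h1 | h1 | h1 | h1
        · right; rw [hinx]; split_ifs <;> omega
        · left; rw [hip]; split_ifs <;> omega
        · left; rw [hip]; split_ifs <;> [omega; skip]
          exfalso; omega
        · right; rw [hinx]; split_ifs <;> [skip; omega]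
          omega
      rcases hcases with h | h
      · exact Set.mem_insert_iff.2 (Or.inl (by rw [← heq, h]))
      · exact Set.mem_insert_iff.2 (Or.inr (Set.mem_singleton_iff.2 (by rw [← heq, h])))
    have hsup : ({zs.getD ip d, zs.getD inx d} : Set V) ⊆ G.neighborSet (zs.getD i d) := by
      rintro u (rfl | rfl)
      · exact hprev
      · exact hnext
    have hne2 : zs.getD ip d ≠ zs.getD inx d := by
      intro h
      have := hinj hipk hinxk h
      rw [hip, hinx] at this
      split_ifs at this <;> omega
    rw [Set.Subset.antisymm hsub hsup, Set.ncard_pair hne2]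
  -- step 2: the connected component of the cycle is the cycle itself
  set C := G.connectedComponentMk (zs.getD 0 d) with hC
  have hclosed : ∀ x ∈ {x : V | x ∈ zs}, ∀ y, G.Adj x y → y ∈ {x : V | x ∈ zs} :=
    fun x hx y hxy => hall x hx y hxy
  have hreach : ∀ i, i < k → G.Reachable (zs.getD 0 d) (zs.getD i d) := by
    intro i
    induction i with
    | zero => exact fun _ => Reachable.refl _
    | succ i ih =>
        intro hi
        exact (ih (by omega)).trans (hadj i (by omega)).reachable
  have hsupp : C.supp = {x : V | x ∈ zs} := by
    ext u
    rw [SimpleGraph.ConnectedComponent.mem_supp_iff, hC, SimpleGraph.ConnectedComponent.eq]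
    constructor
    · intro h
      obtain ⟨p⟩ := h.symm
      exact walk_closed hclosed p (getD_mem (by omega))
    · intro hu
      obtain ⟨⟨b, hb⟩, heq⟩ := List.mem_iff_get.1 hu
      rw [← getD_eq_get' hb] at heq
      exact heq ▸ (hreach b hb).symm
  refine hodd C ⟨?_, ?_⟩
  · rw [hsupp, ncard_listset hnd]
    exact hk
  · intro v hv
    rw [hsupp] at hv
    obtain ⟨⟨b, hb⟩, heq⟩ := List.mem_iff_get.1 hv
    rw [← getD_eq_get' hb] at heq
    exact heq ▸ hnbhd b hb

lemma step_main (hmin : ∀ v : V, 2 ≤ (G.neighborSet v).ncard)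
    (hodd : ∀ C : G.ConnectedComponent,
      ¬ (Odd C.supp.ncard ∧ ∀ v ∈ C.supp, (G.neighborSet v).ncard = 2))
    {S : Set V} (hS : Good G S) (hSne : S ≠ Set.univ) :
    ∃ S', S ⊆ S' ∧ S ≠ S' ∧ Good G S' := by
  by_cases ha : ∃ v, v ∉ S ∧ 2 ≤ (G.neighborSet v ∩ S).ncard
  · obtain ⟨v, hv, h2⟩ := ha
    refine ⟨S ∪ ∅ ∪ {x | x ∈ [v]}, fun x hx => Or.inl (Or.inl hx), ?_, ?_⟩
    · intro h
      exact hv (h ▸ (Or.inr (by simp) : v ∈ S ∪ ∅ ∪ {x | x ∈ [v]}))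
    refine hS.extend ∅ [v] (by simp) (by simpa using hv) (by simp) (by simp) (by simp) ?_
    intro i hi
    have hi0 : i = 0 := by simpa using hi
    subst hi0
    refine le_trans h2 (Set.ncard_le_ncard ?_ (Set.toFinite _))
    exact Set.inter_subset_inter_right _ (fun x hx => Or.inl (Or.inl hx))
  by_cases hb : ∃ v w u, v ∉ S ∧ w ∉ S ∧ u ∈ S ∧ G.Adj w v ∧ G.Adj w u
  · obtain ⟨v, w, u, hv, hw, hu, hwv, hwu⟩ := hb
    refine ⟨S ∪ {v} ∪ {x | x ∈ [w]}, fun x hx => Or.inl (Or.inl hx), ?_, ?_⟩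
    · intro h
      exact hv (h ▸ (Or.inl (Or.inr rfl) : v ∈ S ∪ {v} ∪ {x | x ∈ [w]}))
    refine hS.extend {v} [w] (by simp) (by simpa using hw) (by simpa using hv) ?_
      (by simp [Set.ncard_singleton]) ?_
    · intro x hx
      simp only [List.mem_singleton] at hx
      subst hx
      simpa using (G.ne_of_adj hwv)
    · intro i hi
      have hi0 : i = 0 := by simpa using hi
      subst hi0
      have : ([w].get ⟨0, by simp⟩) = w := rfl
      rw [this]
      refine two_le_ncard_inter hwu hwv ?_ (Or.inl (Or.inl hu)) (Or.inl (Or.inr rfl))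
      intro h; exact hv (h ▸ hu)
  -- case (c)
  · have hcl : ∀ v, v ∉ S → ∀ u, G.Adj v u → u ∉ S := by
      intro v hv u hadj hu
      have h1 : ¬ 2 ≤ (G.neighborSet v ∩ S).ncard := fun h => ha ⟨v, hv, h⟩
      have h2 : ∃ x ∈ G.neighborSet v, x ∉ S := by
        by_contra hcon
        push_neg at hcon
        have : G.neighborSet v ∩ S = G.neighborSet v := by
          apply Set.inter_eq_self_of_subset_left
          exact fun x hx => hcon x hx
        rw [this] at h1
        exact h1 (hmin v)
      obtain ⟨x, hx, hxS⟩ := h2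
      exact hb ⟨x, v, u, hxS, hv, hu, hx, hadj⟩
    obtain ⟨v0, hv0⟩ := Set.ne_univ_iff_exists_notMem S |>.1 hSne
    set R : Set V := {x | x ∉ S} with hR
    have hRcl : ∀ v ∈ R, ∀ w, G.Adj v w → w ∈ R := fun v hv w hadj => hcl v hv w hadj
    have hcycex : ∃ zs, IsCyc G v0 R zs :=
      exists_cyc v0 (fun v _ => hmin v) hRcl ⟨v0, hv0⟩
    have hKne : {n | ∃ ys, IsCyc G v0 R ys ∧ ys.length = n}.Nonempty := by
      obtain ⟨zs, hzs⟩ := hcycex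
      exact ⟨zs.length, zs, hzs, rfl⟩
    obtain ⟨zs, hzs, hzslen⟩ := Nat.sInf_mem hKne
    have hminlen : ∀ ys, IsCyc G v0 R ys → zs.length ≤ ys.length := by
      intro ys hys
      rw [hzslen]
      exact Nat.sInf_le ⟨ys, hys, rfl⟩
    rcases Nat.even_or_odd zs.length with hpar | hpar
    · exact seed_even hS hzs hpar
    · by_cases hall : ∀ x ∈ zs, ∀ u, G.Adj x u → u ∈ zs
      · exact absurd (no_trapped_odd hmin hodd hzs hminlen hall hpar) (fun h => h)
      · push_neg at hall
        obtain ⟨x, hx, u, hxu, huz⟩ := hall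
        obtain ⟨⟨b, hb⟩, heq⟩ := List.mem_iff_get.1 hx
        rw [← getD_eq_get' hb] at heq
        obtain ⟨ys, hys, hysmem, hyslen, hyshead⟩ := IsCyc.rotate b zs hzs hb
        have hyu : G.Adj (ys.getD 0 v0) u := by rw [hyshead, heq]; exact hxu
        have huy : u ∉ ys := fun h => huz ((hysmem u).1 h)
        have huS : u ∉ S := hcl x (hzs.2.2.1 x hx) u (heq ▸ hxu)
        exact seed_odd hS hys (hyslen ▸ hpar) hyu huy huS

lemma good_univ (hmin : ∀ v : V, 2 ≤ (G.neighborSet v).ncard)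
    (hodd : ∀ C : G.ConnectedComponent,
      ¬ (Odd C.supp.ncard ∧ ∀ v ∈ C.supp, (G.neighborSet v).ncard = 2)) :
    Good G Set.univ := by
  suffices h : ∀ n (S : Set V), Good G S → Fintype.card V ≤ n + S.ncard → Good G Set.univ by
    exact h (Fintype.card V) ∅ good_empty (by simp)
  intro n
  induction n with
  | zero =>
      intro S hS hle
      have : S = Set.univ := by
        refine Set.eq_of_subset_of_ncard_le (Set.subset_univ S) ?_ Set.finite_univ
        rw [Set.ncard_univ, Nat.card_eq_fintype_card]
        simpa using hle
      exact this ▸ hS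
  | succ n ih =>
      intro S hS hle
      by_cases hSu : S = Set.univ
      · exact hSu ▸ hS
      · obtain ⟨S', hsub, hne, hS'⟩ := step_main hmin hodd hS hSu
        have hlt : S.ncard < S'.ncard :=
          Set.ncard_lt_ncard (ssubset_of_ne_of_subset hne hsub) (Set.toFinite _)
        exact ih S' hS' (by omega)

end DynMain

/-- If `G` has minimum degree at least `2`, no connected component of `G` is an odd cycle
(i.e. no component has odd order with all its vertices of degree `2` in `G`), and every
vertex has threshold `2`, then `G` has a dynamic monopoly of size at most `n/2`. -/
theorem stmt6 {V : Type*} [Fintype V] (G : SimpleGraph V)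
    (hmin : ∀ v : V, 2 ≤ (G.neighborSet v).ncard)
    (hodd : ∀ C : G.ConnectedComponent,
      ¬ (Odd C.supp.ncard ∧ ∀ v ∈ C.supp, (G.neighborSet v).ncard = 2)) :
    ∃ D : Set V, IsDynamo G (fun _ => 2) D ∧ 2 * D.ncard ≤ Fintype.card V := by
  obtain ⟨D, L, hnd, hld, huni, hcd, hct⟩ := good_univ hmin hodd
  refine ⟨D, cert_dynamo (fun _ => 2) hct huni, ?_⟩
  have hdisj : Disjoint D {x | x ∈ L} := by
    rw [Set.disjoint_right]
    exact fun x hx => hld x hx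
  have hcard : (Set.univ : Set V).ncard = D.ncard + L.length := by
    rw [← huni, Set.ncard_union_eq hdisj (Set.toFinite _) (Set.toFinite _), ncard_listset hnd]
  rw [Set.ncard_univ, Nat.card_eq_fintype_card] at hcard
  omega
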